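/- arXiv:2403.12826 — 2 statements merged into one kernel-verified Lean document; each statement's English description precedes it below -/
import Mathlib

section
/- DEIM selection conditioning bound: if the DEIM algorithm is applied to a matrix U ∈ ℝ^{n×r} with orthonormal columns to select row indices I, then ‖(U(I,:))^{-1}‖₂ ≤ (1+√(2n))^{r-1} / ‖u₁‖_∞, where u₁ is the first column of U; in particular U(I,:) is invertible. -/
open Matrix

/-- Index of a maximizer of `|R|` over `Fin n`. -/
noncomputable def argmaxAbs {n : ℕ} [NeZero n] (R : Fin n → ℝ) : Fin n :=
  Classical.choose
    (Finset.exists_max_image Finset.univ (fun x => |R x|) Finset.univ_nonempty)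

/-- The DEIM greedy selection: the first index maximizes `|u₁|`; at step `m`,
interpolate the next column on the previously selected indices, form the
residual, and select the index of its largest absolute entry. `Ucol j` is the
`j`-th column. -/
noncomputable def deimStep (n : ℕ) [NeZero n] (Ucol : ℕ → Fin n → ℝ) :
    (m : ℕ) → Fin m → Fin n
  | 0 => Fin.elim0
  | m + 1 => fun i =>
    if h : (i : ℕ) < m then deimStep n Ucol m ⟨i, h⟩
    else
      let prev := deimStep n Ucol m
      let c : Fin m → ℝ :=
        (Matrix.of fun a b : Fin m => Ucol b (prev a))⁻¹.mulVec
          fun a => Ucol m (prev a)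
      argmaxAbs fun x => Ucol m x - ∑ b : Fin m, Ucol b x * c b

/-- The DEIM row indices selected from the columns of `U`. -/
noncomputable def deimSelect {n r : ℕ} [NeZero n]
    (U : Matrix (Fin n) (Fin r) ℝ) : Fin r → Fin n :=
  deimStep n (fun j x => if h : j < r then U x ⟨j, h⟩ else 0) r

namespace DeimAux

open Function
open scoped Matrix.Norms.L2Operator

lemma argmaxAbs_spec {n : ℕ} [NeZero n] (R : Fin n → ℝ) (x : Fin n) :
    |R x| ≤ |R (argmaxAbs R)| :=
  (Classical.choose_spec
    (Finset.exists_max_image Finset.univ (fun x => |R x|) Finset.univ_nonempty)).2 x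
    (Finset.mem_univ x)

lemma euc_norm_sq {k : ℕ} (x : EuclideanSpace ℝ (Fin k)) : ‖x‖ ^ 2 = ∑ i, (x i) ^ 2 := by
  rw [EuclideanSpace.norm_eq, Real.sq_sqrt (by positivity)]
  simp [sq_abs]

lemma le_of_sq_le_sq {x y : ℝ} (hy : 0 ≤ y) (h : x ^ 2 ≤ y ^ 2) (hx : 0 ≤ x) : x ≤ y := by
  nlinarith

lemma opnorm_le {a b : ℕ} (M : Matrix (Fin a) (Fin b) ℝ) {C : ℝ} (hC : 0 ≤ C)
    (h : ∀ v : Fin b → ℝ, ∑ i, (M.mulVec v i) ^ 2 ≤ C ^ 2 * ∑ j, (v j) ^ 2) : ‖M‖ ≤ C := by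
  rw [Matrix.l2_opNorm_def]
  apply ContinuousLinearMap.opNorm_le_bound _ hC
  intro x
  apply le_of_sq_le_sq (by positivity) _ (norm_nonneg _)
  rw [euc_norm_sq, mul_pow, euc_norm_sq]
  exact h x

lemma sq_sum_mulVec_le {a b : ℕ} (M : Matrix (Fin a) (Fin b) ℝ) (v : Fin b → ℝ) :
    ∑ i, (M.mulVec v i) ^ 2 ≤ ‖M‖ ^ 2 * ∑ j, (v j) ^ 2 := by
  have := Matrix.l2_opNorm_mulVec M ((WithLp.equiv 2 (Fin b → ℝ)).symm v)
  have h2 : ‖(EuclideanSpace.equiv (Fin a) ℝ).symm (M *ᵥ (WithLp.equiv 2 (Fin b → ℝ)).symm v)‖ ^ 2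
      = ∑ i, (M.mulVec v i) ^ 2 := by rw [euc_norm_sq]; rfl
  have h3 : ‖((WithLp.equiv 2 (Fin b → ℝ)).symm v : EuclideanSpace ℝ (Fin b))‖ ^ 2
      = ∑ j, (v j) ^ 2 := by rw [euc_norm_sq]; rfl
  nlinarith [norm_nonneg ((EuclideanSpace.equiv (Fin a) ℝ).symm
      (M *ᵥ (WithLp.equiv 2 (Fin b → ℝ)).symm v)),
    norm_nonneg ((WithLp.equiv 2 (Fin b → ℝ)).symm v : EuclideanSpace ℝ (Fin b)), norm_nonneg M]

lemma rank_one_norm_le {a b : ℕ} (x : Fin a → ℝ) (y : Fin b → ℝ) :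
    ‖Matrix.of (fun i j => x i * y j)‖ ≤ Real.sqrt (∑ i, x i ^ 2) * Real.sqrt (∑ j, y j ^ 2) := by
  apply opnorm_le _ (by positivity)
  intro v
  have hmv : ∀ i, (Matrix.of (fun i j => x i * y j)).mulVec v i = x i * ∑ j, y j * v j := by
    intro i; simp [Matrix.mulVec, dotProduct, Finset.mul_sum, mul_assoc]
  have hcs : (∑ j, y j * v j) ^ 2 ≤ (∑ j, y j ^ 2) * ∑ j, v j ^ 2 :=
    Finset.sum_mul_sq_le_sq_mul_sq _ _ _
  calc ∑ i, ((Matrix.of (fun i j => x i * y j)).mulVec v i) ^ 2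
      = (∑ i, x i ^ 2) * (∑ j, y j * v j) ^ 2 := by
        simp only [hmv, mul_pow]; rw [← Finset.sum_mul]
    _ ≤ (∑ i, x i ^ 2) * ((∑ j, y j ^ 2) * ∑ j, v j ^ 2) := by
        apply mul_le_mul_of_nonneg_left hcs (by positivity)
    _ = (Real.sqrt (∑ i, x i ^ 2) * Real.sqrt (∑ j, y j ^ 2)) ^ 2 * ∑ j, v j ^ 2 := by
        rw [mul_pow, Real.sq_sqrt (by positivity), Real.sq_sqrt (by positivity)]; ring

lemma norm_one_by_one (M : Matrix (Fin 1) (Fin 1) ℝ) : ‖M‖ = |M 0 0| := by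
  apply le_antisymm
  · apply opnorm_le _ (abs_nonneg _)
    intro v
    simp [Matrix.mulVec, dotProduct, Fin.sum_univ_one, sq_abs, mul_pow]
  · have := sq_sum_mulVec_le M (fun _ => 1)
    simp only [Fin.sum_univ_one, Matrix.mulVec, dotProduct, one_pow, mul_one] at this
    nlinarith [norm_nonneg M, abs_nonneg (M 0 0), sq_abs (M 0 0)]

lemma one_le_norm_inv {k : ℕ} [NeZero k] {M : Matrix (Fin k) (Fin k) ℝ}
    (hM : IsUnit M) (h1 : ‖M‖ ≤ 1) : 1 ≤ ‖M⁻¹‖ := by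
  set e : Fin k → ℝ := fun j => if j = 0 then 1 else 0 with he
  have hMe : M⁻¹.mulVec (M.mulVec e) = e := by
    rw [Matrix.mulVec_mulVec, Matrix.nonsing_inv_mul _ (Matrix.isUnit_iff_isUnit_det M |>.mp hM),
      Matrix.one_mulVec]
  have hesq : ∑ j, (e j) ^ 2 = 1 := by
    simp [he, apply_ite (· ^ 2 : ℝ → ℝ)]
  have h2 := sq_sum_mulVec_le M⁻¹ (M.mulVec e)
  have h3 := sq_sum_mulVec_le M e
  rw [hMe, hesq] at h2
  rw [hesq, mul_one] at h3
  have hS0 : (0:ℝ) ≤ ∑ i, (M.mulVec e i) ^ 2 := by positivity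
  have hb : ‖M‖ ^ 2 ≤ 1 := by nlinarith [norm_nonneg M]
  have hc : 1 ≤ ‖M⁻¹‖ ^ 2 := by nlinarith [sq_nonneg ‖M⁻¹‖]
  nlinarith [norm_nonneg M⁻¹]

section U
variable {n r : ℕ} [NeZero n] [NeZero r] (U : Matrix (Fin n) (Fin r) ℝ)

lemma col_orth (hU : Uᵀ * U = 1) (j k : Fin r) :
    ∑ x, U x j * U x k = if j = k then 1 else 0 := by
  have := congrFun (congrFun hU j) k
  simpa [Matrix.mul_apply, Matrix.one_apply] using this

lemma row_sq_le_one (hU : Uᵀ * U = 1) (x : Fin n) : ∑ j, (U x j) ^ 2 ≤ 1 := by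
  set Pm := U * Uᵀ with hPdef
  have hP : Pm * Pm = Pm := by
    rw [hPdef, Matrix.mul_assoc, ← Matrix.mul_assoc Uᵀ, hU, Matrix.one_mul]
  have hsym : ∀ y z, Pm y z = Pm z y := by
    intro y z
    simp only [hPdef, Matrix.mul_apply, Matrix.transpose_apply]
    exact Finset.sum_congr rfl fun _ _ => mul_comm _ _
  have h1 : Pm x x = ∑ y, (Pm x y) ^ 2 := by
    have := congrFun (congrFun hP x) x
    rw [Matrix.mul_apply] at this
    rw [← this]
    exact Finset.sum_congr rfl fun y _ => by rw [sq, hsym x y]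
  have h2 : (Pm x x) ^ 2 ≤ ∑ y, (Pm x y) ^ 2 :=
    Finset.single_le_sum (f := fun y => Pm x y ^ 2) (fun y _ => sq_nonneg _) (Finset.mem_univ x)
  have h3 : Pm x x = ∑ j, (U x j) ^ 2 := by
    simp only [hPdef, Matrix.mul_apply, Matrix.transpose_apply, sq]
  have h4 : (0:ℝ) ≤ ∑ j, (U x j) ^ 2 := by positivity
  nlinarith [h1, h2]

lemma sum_ext_eq {m : ℕ} (hmr : m ≤ r) (f : Fin r → ℝ)
    (hf : ∀ j : Fin r, ¬ ((j : ℕ) < m) → f j = 0) :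
    ∑ j, f j = ∑ b : Fin m, f (Fin.castLE hmr b) := by
  have hmap : ∑ j ∈ Finset.univ.map ⟨Fin.castLE hmr, Fin.castLE_injective hmr⟩, f j
      = ∑ b : Fin m, f (Fin.castLE hmr b) := Finset.sum_map _ _ _
  rw [← hmap]
  apply (Finset.sum_subset (Finset.subset_univ _) _).symm
  intro j _ hj
  apply hf
  intro hlt
  apply hj
  simp only [Finset.mem_map, Finset.mem_univ, true_and, Function.Embedding.coeFn_mk]
  exact ⟨⟨j, hlt⟩, Fin.ext rfl⟩

lemma sum_sel_le {k : ℕ} {α : Type*} [Fintype α] [DecidableEq α] (S : Fin k → α) (hS : Injective S)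
    (f : α → ℝ) (hf : ∀ x, 0 ≤ f x) : ∑ a, f (S a) ≤ ∑ x, f x := by
  rw [← Finset.sum_image (f := f) (g := S) (fun a _ b _ h => hS h)]
  exact Finset.sum_le_sum_of_subset_of_nonneg (Finset.subset_univ _) fun x _ _ => hf x

lemma sum_sq_mulVec_orth (hU : Uᵀ * U = 1) (ve : Fin r → ℝ) :
    ∑ x, (U.mulVec ve x) ^ 2 = ∑ j, (ve j) ^ 2 := by
  have hx : ∀ x, U.mulVec ve x = ∑ j, U x j * ve j := fun x => rfl
  calc ∑ x, (U.mulVec ve x) ^ 2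
      = ∑ x, ∑ j, ∑ k, (ve j * ve k) * (U x j * U x k) := by
        refine Finset.sum_congr rfl fun x _ => ?_
        rw [hx, sq, Finset.sum_mul_sum]
        exact Finset.sum_congr rfl fun j _ => Finset.sum_congr rfl fun k _ => by ring
    _ = ∑ j, ∑ k, (ve j * ve k) * ∑ x, U x j * U x k := by
        rw [Finset.sum_comm]
        refine Finset.sum_congr rfl fun j _ => ?_
        rw [Finset.sum_comm]
        exact Finset.sum_congr rfl fun k _ => (Finset.mul_sum _ _ _).symm
    _ = ∑ j, (ve j) ^ 2 := by
        simp only [col_orth U hU, mul_ite, mul_one, mul_zero]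
        simp [sq]

/-- The column function handed to `deimStep`. -/
def Uc : ℕ → Fin n → ℝ := fun j x => if h : j < r then U x ⟨j, h⟩ else 0

lemma Uc_lt {j : ℕ} (hj : j < r) (x : Fin n) : Uc U j x = U x ⟨j, hj⟩ := dif_pos hj

/-- The DEIM selected submatrix at stage `m`. -/
noncomputable def selM (m : ℕ) : Matrix (Fin m) (Fin m) ℝ :=
  Matrix.of fun a b : Fin m => Uc U b (deimStep n (Uc U) m a)

lemma sel_norm_le_one (hU : Uᵀ * U = 1) {m : ℕ} (hmr : m ≤ r) (S : Fin m → Fin n)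
    (hS : Injective S) : ‖Matrix.of (fun a b : Fin m => Uc U b (S a))‖ ≤ 1 := by
  apply opnorm_le _ zero_le_one
  intro v
  set ve : Fin r → ℝ := fun j => if h : (j : ℕ) < m then v ⟨j, h⟩ else 0 with hve
  have hve0 : ∀ j : Fin r, ¬ ((j : ℕ) < m) → ve j = 0 := fun j hj => dif_neg hj
  have hvecast : ∀ b : Fin m, ve (Fin.castLE hmr b) = v b := by
    intro b
    show (if h : ((Fin.castLE hmr b : Fin r) : ℕ) < m then v ⟨_, h⟩ else 0) = v b
    rw [dif_pos (by simpa using b.isLt)]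
    exact congrArg v (Fin.ext rfl)
  have key1 : ∀ x, U.mulVec ve x = ∑ b : Fin m, Uc U b x * v b := by
    intro x
    show ∑ j, U x j * ve j = _
    rw [sum_ext_eq hmr (fun j => U x j * ve j) (fun j hj => by show U x j * ve j = 0; rw [hve0 j hj, mul_zero])]
    refine Finset.sum_congr rfl fun b _ => ?_
    rw [hvecast b, Uc_lt U (lt_of_lt_of_le b.isLt hmr)]
    rfl
  have key2 := sum_sq_mulVec_orth U hU ve
  have key3 : ∑ j, (ve j) ^ 2 = ∑ b, (v b) ^ 2 := by
    rw [sum_ext_eq hmr _ (fun j hj => by show ve j ^ 2 = 0; rw [hve0 j hj]; exact zero_pow two_ne_zero)]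
    exact Finset.sum_congr rfl fun b _ => by rw [hvecast b]
  have hmv : ∀ a, (Matrix.of (fun a b : Fin m => Uc U b (S a))).mulVec v a
      = U.mulVec ve (S a) := by
    intro a; rw [key1]; rfl
  calc ∑ a, ((Matrix.of (fun a b : Fin m => Uc U b (S a))).mulVec v a) ^ 2
      = ∑ a, (U.mulVec ve (S a)) ^ 2 := by
        exact Finset.sum_congr rfl fun a _ => by rw [hmv]
    _ ≤ ∑ x, (U.mulVec ve x) ^ 2 :=
        sum_sel_le S hS (fun x => (U.mulVec ve x) ^ 2) (fun x => sq_nonneg _)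
    _ = ∑ b, (v b) ^ 2 := by rw [key2, key3]
    _ ≤ 1 ^ 2 * ∑ b, (v b) ^ 2 := by rw [one_pow, one_mul]

/-- DEIM auxiliary data at stage `m`. -/
noncomputable def selP (m : ℕ) : Fin m → Fin n := deimStep n (Uc U) m

noncomputable def bvD (m : ℕ) : Fin m → ℝ := fun a => Uc U m (selP U m a)

noncomputable def cD (m : ℕ) : Fin m → ℝ := (selM U m)⁻¹.mulVec (bvD U m)

noncomputable def RD (m : ℕ) : Fin n → ℝ :=
  fun x => Uc U m x - ∑ b : Fin m, Uc U b x * cD U m b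

noncomputable def zD (m : ℕ) : Fin n := argmaxAbs (RD U m)

lemma selP_castSucc (m : ℕ) (a : Fin m) :
    selP U (m + 1) (Fin.castSucc a) = selP U m a := by
  have h : ((Fin.castSucc a : Fin (m+1)) : ℕ) < m := a.isLt
  show dite _ _ _ = _
  rw [dif_pos h]
  congr 1

lemma selP_last (m : ℕ) : selP U (m + 1) (Fin.last m) = zD U m := by
  show dite _ _ _ = _
  rw [dif_neg (by simp)]
  rfl

set_option maxHeartbeats 2000000 in
lemma deim_main (hU : Uᵀ * U = 1) :
    ∀ m, 1 ≤ m → m ≤ r →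
      Injective (deimStep n (Uc U) m) ∧ IsUnit (selM U m) ∧
      ‖(selM U m)⁻¹‖ ≤ (1 + Real.sqrt (2 * n)) ^ (m - 1) /
        (Finset.univ.sup' Finset.univ_nonempty fun x => |U x 0|) := by
  set s := Finset.univ.sup' Finset.univ_nonempty fun x : Fin n => |U x 0| with hs
  have hs0 : ∑ x, (U x 0) ^ 2 = 1 := by
    have := col_orth U hU 0 0
    simpa [sq] using this
  have hs_pos : 0 < s := by
    have hex : ∃ x, U x 0 ≠ 0 := by
      by_contra h
      push_neg at h
      have hz0 : ∑ x, (U x 0) ^ 2 = 0 :=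
        Finset.sum_eq_zero fun x _ => by rw [h x]; exact zero_pow two_ne_zero
      rw [hs0] at hz0
      norm_num at hz0
    obtain ⟨x, hx⟩ := hex
    refine lt_of_lt_of_le (abs_pos.mpr hx) ?_
    rw [hs]
    exact Finset.le_sup' (fun x : Fin n => |U x 0|) (Finset.mem_univ x)
  have hK0 : (0:ℝ) ≤ 1 + Real.sqrt (2 * n) := by positivity
  refine Nat.le_induction ?_ ?_
  · -- base case m = 1
    intro h1r
    have h0r : 0 < r := h1r
    have hUc0 : ∀ x, Uc U 0 x = U x 0 := by
      intro x
      rw [Uc_lt U h0r]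
      exact congrArg (U x) (Fin.ext (by simp))
    have hP1 : ∀ i : Fin 1, selP U 1 i = argmaxAbs (RD U 0) := by
      intro i
      rw [Subsingleton.elim i (Fin.last 0), selP_last]
      rfl
    have hR0 : ∀ x, RD U 0 x = U x 0 := by
      intro x
      show Uc U 0 x - ∑ b : Fin 0, Uc U (b : ℕ) x * cD U 0 b = U x 0
      rw [hUc0]
      simp
    set z := argmaxAbs (RD U 0) with hzdef
    have hmax : ∀ x, |U x 0| ≤ |U z 0| := by
      intro x
      have := argmaxAbs_spec (RD U 0) x
      rwa [hR0, hR0] at this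
    have hzs : |U z 0| = s := by
      refine le_antisymm ?_ ?_
      · rw [hs]
        exact Finset.le_sup' (fun x : Fin n => |U x 0|) (Finset.mem_univ z)
      · rw [hs]
        exact Finset.sup'_le _ _ fun x _ => hmax x
    have hent : ∀ a b : Fin 1, selM U 1 a b = U z 0 := by
      intro a b
      show Uc U (b : ℕ) (selP U 1 a) = U z 0
      rw [hP1]
      have hb : (b : ℕ) = 0 := by omega
      rw [hb, hUc0]
    have hne : U z 0 ≠ 0 := by
      intro h
      rw [h, abs_zero] at hzs
      exact absurd hzs.symm (ne_of_gt hs_pos)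
    have hunit : IsUnit (selM U 1) := by
      rw [Matrix.isUnit_iff_isUnit_det, Matrix.det_fin_one, hent]
      exact isUnit_iff_ne_zero.mpr hne
    have hinv : (selM U 1)⁻¹ = Matrix.of fun _ _ : Fin 1 => (U z 0)⁻¹ := by
      apply Matrix.inv_eq_left_inv
      ext a b
      rw [Matrix.mul_apply, Fin.sum_univ_one, hent]
      show (U z 0)⁻¹ * U z 0 = (1 : Matrix (Fin 1) (Fin 1) ℝ) a b
      rw [inv_mul_cancel₀ hne, Subsingleton.elim a b, Matrix.one_apply_eq]
    refine ⟨fun a b _ => Subsingleton.elim a b, hunit, ?_⟩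
    rw [hinv, norm_one_by_one]
    show |(U z 0)⁻¹| ≤ _
    rw [abs_inv, hzs]
    simp
  · -- inductive step
    intro m hm1 ih hm1r
    have hmr : m ≤ r := by omega
    have hmltr : m < r := by omega
    have hmne : NeZero m := ⟨by omega⟩
    obtain ⟨hPinj, hAunit, hBle⟩ := ih hmr
    have hAle1 : ‖selM U m‖ ≤ 1 := sel_norm_le_one U hU hmr _ hPinj
    set A := selM U m with hA
    set B := (selM U m)⁻¹ with hB
    have hAdet : IsUnit A.det := (Matrix.isUnit_iff_isUnit_det A).mp hAunit
    have hBA : B * A = 1 := Matrix.nonsing_inv_mul A hAdet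
    have hAB : A * B = 1 := Matrix.mul_nonsing_inv A hAdet
    have hB1 : 1 ≤ ‖B‖ := one_le_norm_inv hAunit hAle1
    -- abbreviations
    set c := cD U m with hc
    set z := zD U m with hz
    set R := RD U m with hR
    set g : Fin m → ℝ := fun k => Uc U (k : ℕ) z with hg
    set w : Fin m → ℝ := fun b => ∑ k, g k * B k b with hw
    set ρ := R z with hρ
    -- residual via orthonormal expansion
    set em : Fin r → ℝ := fun j => if (j : ℕ) = m then 1 else 0 with hem
    set vc : Fin r → ℝ := fun j => if h : (j : ℕ) < m then c ⟨j, h⟩ else 0 with hvc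
    have hvc0 : ∀ j : Fin r, ¬ ((j : ℕ) < m) → vc j = 0 := fun j hj => dif_neg hj
    have hvccast : ∀ b : Fin m, vc (Fin.castLE hmr b) = c b := by
      intro b
      show (if h : ((Fin.castLE hmr b : Fin r) : ℕ) < m then c ⟨_, h⟩ else 0) = c b
      rw [dif_pos (by simpa using b.isLt)]
      exact congrArg c (Fin.ext rfl)
    have hemsum : ∀ f : Fin r → ℝ, ∑ j, f j * em j = f ⟨m, hmltr⟩ := by
      intro f
      have : ∀ j : Fin r, f j * em j = if j = ⟨m, hmltr⟩ then f j else 0 := by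
        intro j
        by_cases hj : j = ⟨m, hmltr⟩
        · rw [if_pos hj, hem]
          simp [hj]
        · rw [if_neg hj, hem]
          have : ¬ ((j : ℕ) = m) := by
            intro hc'
            exact hj (Fin.ext hc')
          simp [this]
      rw [Finset.sum_congr rfl fun j _ => this j, Finset.sum_ite_eq' Finset.univ _ f]
      simp
    have hd1 : ∀ x, U.mulVec (fun j => em j - vc j) x = R x := by
      intro x
      show ∑ j, U x j * (em j - vc j) = R x
      have hsplit : ∑ j, U x j * (em j - vc j)
          = (∑ j, U x j * em j) - ∑ j, U x j * vc j := by
        rw [← Finset.sum_sub_distrib]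
        exact Finset.sum_congr rfl fun j _ => by ring
      rw [hsplit, hemsum (fun j => U x j)]
      have h2 : ∑ j, U x j * vc j = ∑ b : Fin m, Uc U (b : ℕ) x * c b := by
        rw [sum_ext_eq hmr (fun j => U x j * vc j)
          (fun j hj => by show U x j * vc j = 0; rw [hvc0 j hj, mul_zero])]
        refine Finset.sum_congr rfl fun b _ => ?_
        rw [hvccast b, Uc_lt U (lt_of_lt_of_le b.isLt hmr)]
        rfl
      rw [h2]
      show U x ⟨m, hmltr⟩ - _ = Uc U m x - _
      rw [Uc_lt U hmltr]
    have hemvc : ∀ j, em j * vc j = 0 := by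
      intro j
      by_cases hj : (j : ℕ) < m
      · have : ¬ ((j : ℕ) = m) := by omega
        rw [hem]
        simp [this]
      · rw [hvc0 j hj, mul_zero]
    have hd2 : ∑ j, (em j - vc j) ^ 2 = 1 + ∑ b, (c b) ^ 2 := by
      have hpt : ∀ j, (em j - vc j) ^ 2 = em j ^ 2 + vc j ^ 2 := by
        intro j
        have h := hemvc j
        nlinarith [h]
      rw [Finset.sum_congr rfl fun j _ => hpt j, Finset.sum_add_distrib]
      have he2 : ∑ j, em j ^ 2 = 1 := by
        have : ∀ j : Fin r, em j ^ 2 = em j * em j := fun j => sq (em j) ▸ rfl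
        rw [Finset.sum_congr rfl fun j _ => by rw [sq]]
        have := hemsum em
        rw [Finset.sum_congr rfl fun j _ => (rfl : em j * em j = em j * em j), this]
        rw [hem]
        simp
      have hv2 : ∑ j, vc j ^ 2 = ∑ b, (c b) ^ 2 := by
        rw [sum_ext_eq hmr _
          (fun j hj => by show vc j ^ 2 = 0; rw [hvc0 j hj]; exact zero_pow two_ne_zero)]
        exact Finset.sum_congr rfl fun b _ => by rw [hvccast b]
      rw [he2, hv2]
    have hRsum : ∑ x, (R x) ^ 2 = 1 + ∑ b, (c b) ^ 2 := by
      rw [← hd2, ← sum_sq_mulVec_orth U hU (fun j => em j - vc j)]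
      exact Finset.sum_congr rfl fun x _ => by rw [hd1 x]
    have hmax : ∀ x, |R x| ≤ |R z| := fun x => argmaxAbs_spec R x
    have hcnn : (0:ℝ) ≤ ∑ b, (c b) ^ 2 := by positivity
    have hnR : 1 + ∑ b, (c b) ^ 2 ≤ n * ρ ^ 2 := by
      rw [← hRsum]
      calc ∑ x, (R x) ^ 2 ≤ ∑ _x : Fin n, ρ ^ 2 := by
            refine Finset.sum_le_sum fun x _ => ?_
            rw [← sq_abs (R x), ← sq_abs ρ]
            exact pow_le_pow_left₀ (abs_nonneg _) (hmax x) 2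
        _ = n * ρ ^ 2 := by
            rw [Finset.sum_const, Finset.card_univ, Fintype.card_fin, nsmul_eq_mul]
    have hRz : ρ ≠ 0 := by
      intro h0
      rw [h0] at hnR
      simp at hnR
      linarith
    have hRP : ∀ a : Fin m, R (selP U m a) = 0 := by
      intro a
      show Uc U m (selP U m a) - ∑ b : Fin m, Uc U (b : ℕ) (selP U m a) * c b = 0
      have h1 : ∑ b : Fin m, Uc U (b : ℕ) (selP U m a) * c b = (A.mulVec c) a := rfl
      rw [h1, hc]
      show bvD U m a - (A.mulVec ((selM U m)⁻¹.mulVec (bvD U m))) a = 0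
      rw [Matrix.mulVec_mulVec]
      show bvD U m a - ((A * B).mulVec (bvD U m)) a = 0
      rw [hAB, Matrix.one_mulVec, sub_self]
    have hzP : ∀ a : Fin m, z ≠ selP U m a := by
      intro a h
      apply hRz
      show R z = 0
      rw [h]
      exact hRP a
    have hio : ∀ (i : Fin (m+1)) (h : (i : ℕ) < m), selP U (m+1) i = selP U m ⟨i, h⟩ := by
      intro i h
      show dite _ _ _ = _
      rw [dif_pos h]
      rfl
    have hilast : ∀ i : Fin (m+1), ¬ ((i : ℕ) < m) → selP U (m+1) i = z := by
      intro i h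
      have : i = Fin.last m := Fin.ext (by simp; omega)
      rw [this, selP_last]
    -- injectivity of the next selection
    have hinj' : Injective (selP U (m+1)) := by
      intro i j hij
      by_cases hi : (i : ℕ) < m <;> by_cases hj : (j : ℕ) < m
      · rw [hio i hi, hio j hj] at hij
        have := hPinj hij
        have := congrArg Fin.val this
        exact Fin.ext (by simpa using this)
      · rw [hio i hi, hilast j hj] at hij
        exact absurd hij.symm (hzP _)
      · rw [hilast i hi, hio j hj] at hij
        exact absurd hij (hzP _)
      · exact Fin.ext (by omega)
    -- entries of the next selected matrix
    have hM'c : ∀ (k : Fin m) (j : Fin (m+1)),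
        selM U (m+1) (Fin.castSucc k) j = Uc U (j : ℕ) (selP U m k) := by
      intro k j
      show Uc U (j : ℕ) (selP U (m+1) (Fin.castSucc k)) = _
      rw [selP_castSucc]
    have hM'l : ∀ j : Fin (m+1), selM U (m+1) (Fin.last m) j = Uc U (j : ℕ) z := by
      intro j
      show Uc U (j : ℕ) (selP U (m+1) (Fin.last m)) = _
      rw [selP_last]
    -- inverse candidate
    set E : Matrix (Fin (m+1)) (Fin (m+1)) ℝ :=
      Matrix.of fun i j => Fin.snoc (α := fun _ : Fin (m+1) => ℝ)
        (fun a : Fin m => Fin.snoc (α := fun _ : Fin (m+1) => ℝ) (B a) (0:ℝ) j) (0:ℝ) i with hE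
    set vx : Fin (m+1) → ℝ := Fin.snoc c (-1 : ℝ) with hvx
    set wx : Fin (m+1) → ℝ := Fin.snoc w (-1 : ℝ) with hwx
    set N : Matrix (Fin (m+1)) (Fin (m+1)) ℝ :=
      E + ρ⁻¹ • Matrix.of (fun i j => vx i * wx j) with hN
    have hEcc : ∀ (a : Fin m) (k : Fin m), E (Fin.castSucc a) (Fin.castSucc k) = B a k := by
      intro a k; rw [hE]; simp
    have hEcl : ∀ a : Fin m, E (Fin.castSucc a) (Fin.last m) = 0 := by
      intro a; rw [hE]; simp
    have hEl : ∀ j, E (Fin.last m) j = 0 := by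
      intro j; rw [hE]; simp
    have hNcc : ∀ (a k : Fin m),
        N (Fin.castSucc a) (Fin.castSucc k) = B a k + ρ⁻¹ * (c a * w k) := by
      intro a k
      rw [hN]
      simp [hEcc a k, hvx, hwx]
    have hNcl : ∀ a : Fin m, N (Fin.castSucc a) (Fin.last m) = ρ⁻¹ * (c a * (-1)) := by
      intro a
      rw [hN]
      simp [hEcl a, hvx, hwx]
    have hNlc : ∀ k : Fin m, N (Fin.last m) (Fin.castSucc k) = ρ⁻¹ * ((-1) * w k) := by
      intro k
      rw [hN]
      simp [hEl, hvx, hwx]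
    have hNll : N (Fin.last m) (Fin.last m) = ρ⁻¹ * ((-1) * (-1)) := by
      rw [hN]
      simp [hEl, hvx, hwx]
    -- identities
    have hBAe : ∀ (a b : Fin m), ∑ k, B a k * A k b = if a = b then 1 else 0 := by
      intro a b
      have := congrFun (congrFun hBA a) b
      rw [Matrix.mul_apply] at this
      rw [this, Matrix.one_apply]
    have hAval : ∀ (k b : Fin m), Uc U (b : ℕ) (selP U m k) = A k b := fun k b => rfl
    have hbval : ∀ k : Fin m, Uc U m (selP U m k) = bvD U m k := fun k => rfl
    have hcval : ∀ a : Fin m, ∑ k, B a k * bvD U m k = c a := fun a => rfl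
    have hwA : ∀ b : Fin m, ∑ k, w k * A k b = g b := by
      intro b
      rw [hw]
      calc ∑ k, (∑ l, g l * B l k) * A k b
          = ∑ k, ∑ l, g l * (B l k * A k b) := by
            refine Finset.sum_congr rfl fun k _ => ?_
            rw [Finset.sum_mul]
            exact Finset.sum_congr rfl fun l _ => by ring
        _ = ∑ l, ∑ k, g l * (B l k * A k b) := Finset.sum_comm
        _ = ∑ l, g l * ∑ k, B l k * A k b := by
            exact Finset.sum_congr rfl fun l _ => (Finset.mul_sum _ _ _).symm
        _ = g b := by
            rw [Finset.sum_congr rfl fun l _ => by rw [hBAe l b]]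
            simp
    have hwb : ∑ k, w k * bvD U m k = ∑ l, g l * c l := by
      rw [hw]
      calc ∑ k, (∑ l, g l * B l k) * bvD U m k
          = ∑ k, ∑ l, g l * (B l k * bvD U m k) := by
            refine Finset.sum_congr rfl fun k _ => ?_
            rw [Finset.sum_mul]
            exact Finset.sum_congr rfl fun l _ => by ring
        _ = ∑ l, ∑ k, g l * (B l k * bvD U m k) := Finset.sum_comm
        _ = ∑ l, g l * ∑ k, B l k * bvD U m k := by
            exact Finset.sum_congr rfl fun l _ => (Finset.mul_sum _ _ _).symm
        _ = ∑ l, g l * c l := by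
            exact Finset.sum_congr rfl fun l _ => by rw [hcval l]
    have hρval : ρ = Uc U m z - ∑ l, g l * c l := rfl
    -- N is a left inverse
    have hNM : N * selM U (m+1) = 1 := by
      ext i j
      rw [Matrix.mul_apply, Fin.sum_univ_castSucc]
      rcases Fin.eq_castSucc_or_eq_last i with ⟨a, rfl⟩ | rfl <;>
        rcases Fin.eq_castSucc_or_eq_last j with ⟨b, rfl⟩ | rfl
      · -- castSucc a, castSucc b
        have hsum : ∀ k : Fin m, N (Fin.castSucc a) (Fin.castSucc k)
            * selM U (m+1) (Fin.castSucc k) (Fin.castSucc b)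
            = B a k * A k b + ρ⁻¹ * c a * (w k * A k b) := by
          intro k
          rw [hNcc, hM'c]
          have : Uc U ((Fin.castSucc b : Fin (m+1)) : ℕ) (selP U m k) = A k b := by
            rw [Fin.coe_castSucc]; exact hAval k b
          rw [this]
          ring
        rw [Finset.sum_congr rfl fun k _ => hsum k, Finset.sum_add_distrib]
        rw [← Finset.mul_sum, hwA b]
        have h1 : ∑ k, B a k * A k b = if a = b then 1 else 0 := hBAe a b
        rw [h1, hNcl, hM'l]
        have h2 : Uc U ((Fin.castSucc b : Fin (m+1)) : ℕ) z = g b := by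
          rw [Fin.coe_castSucc]
        rw [h2, Matrix.one_apply]
        by_cases hab : a = b
        · subst hab
          rw [if_pos rfl, if_pos rfl]
          ring
        · rw [if_neg hab, if_neg (fun hh => hab (Fin.castSucc_inj.mp hh))]
          ring
      · -- castSucc a, last
        have hsum : ∀ k : Fin m, N (Fin.castSucc a) (Fin.castSucc k)
            * selM U (m+1) (Fin.castSucc k) (Fin.last m)
            = B a k * bvD U m k + ρ⁻¹ * c a * (w k * bvD U m k) := by
          intro k
          rw [hNcc, hM'c]
          have : Uc U ((Fin.last m : Fin (m+1)) : ℕ) (selP U m k) = bvD U m k := by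
            rw [Fin.val_last]
            all_goals rfl
          rw [this]
          ring
        rw [Finset.sum_congr rfl fun k _ => hsum k, Finset.sum_add_distrib]
        rw [← Finset.mul_sum, hwb, hcval a, hNcl, hM'l]
        have h2 : Uc U ((Fin.last m : Fin (m+1)) : ℕ) z = Uc U m z := by
          rw [Fin.val_last]
        rw [h2, Matrix.one_apply, if_neg (Fin.castSucc_lt_last a).ne]
        have : Uc U m z = ρ + ∑ l, g l * c l := by rw [hρval]; ring
        rw [this]
        field_simp
        ring
      · -- last, castSucc b
        have hsum : ∀ k : Fin m, N (Fin.last m) (Fin.castSucc k)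
            * selM U (m+1) (Fin.castSucc k) (Fin.castSucc b)
            = -(ρ⁻¹ * (w k * A k b)) := by
          intro k
          rw [hNlc, hM'c]
          have : Uc U ((Fin.castSucc b : Fin (m+1)) : ℕ) (selP U m k) = A k b := by
            rw [Fin.coe_castSucc]; exact hAval k b
          rw [this]
          ring
        rw [Finset.sum_congr rfl fun k _ => hsum k, Finset.sum_neg_distrib]
        rw [hNll, hM'l]
        have h2 : Uc U ((Fin.castSucc b : Fin (m+1)) : ℕ) z = g b := by
          rw [Fin.coe_castSucc]
        rw [h2, Matrix.one_apply, if_neg (Fin.castSucc_lt_last b).ne']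
        have h4 : ∑ k, ρ⁻¹ * (w k * A k b) = ρ⁻¹ * ∑ k, w k * A k b := by
          rw [Finset.mul_sum]
        rw [h4, hwA b]
        ring
      · -- last, last
        have hsum : ∀ k : Fin m, N (Fin.last m) (Fin.castSucc k)
            * selM U (m+1) (Fin.castSucc k) (Fin.last m)
            = -(ρ⁻¹ * (w k * bvD U m k)) := by
          intro k
          rw [hNlc, hM'c]
          have : Uc U ((Fin.last m : Fin (m+1)) : ℕ) (selP U m k) = bvD U m k := by
            rw [Fin.val_last]
            all_goals rfl
          rw [this]
          ring
        rw [Finset.sum_congr rfl fun k _ => hsum k, Finset.sum_neg_distrib]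
        rw [hNll, hM'l]
        have h2 : Uc U ((Fin.last m : Fin (m+1)) : ℕ) z = Uc U m z := by
          rw [Fin.val_last]
        rw [h2, Matrix.one_apply_eq]
        have h4 : ∑ k, ρ⁻¹ * (w k * bvD U m k) = ρ⁻¹ * ∑ k, w k * bvD U m k := by
          rw [Finset.mul_sum]
        rw [h4, hwb]
        have : Uc U m z = ρ + ∑ l, g l * c l := by rw [hρval]; ring
        rw [this]
        field_simp
        ring
    have hM'unit : IsUnit (selM U (m+1)) := (Matrix.isUnit_iff_isUnit_det _).mpr (Matrix.isUnit_det_of_left_inverse hNM)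
    have hM'inv : (selM U (m+1))⁻¹ = N := Matrix.inv_eq_left_inv hNM
    -- norm bounds
    have hEnorm : ‖E‖ ≤ ‖B‖ := by
      apply opnorm_le _ (norm_nonneg B)
      intro v
      have hEmv1 : ∀ a : Fin m, E.mulVec v (Fin.castSucc a)
          = B.mulVec (fun b => v (Fin.castSucc b)) a := by
        intro a
        show ∑ j, E (Fin.castSucc a) j * v j = _
        rw [Fin.sum_univ_castSucc]
        rw [Finset.sum_congr rfl fun k _ => by rw [hEcc a k], hEcl a, zero_mul, add_zero]
        rfl
      have hEmv2 : E.mulVec v (Fin.last m) = 0 := by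
        show ∑ j, E (Fin.last m) j * v j = 0
        rw [Finset.sum_congr rfl fun j _ => by rw [hEl j, zero_mul]]
        exact Finset.sum_const_zero
      rw [Fin.sum_univ_castSucc (f := fun i => (E.mulVec v i) ^ 2)]
      rw [Finset.sum_congr rfl fun a _ => by rw [hEmv1 a], hEmv2]
      rw [Fin.sum_univ_castSucc (f := fun j => (v j) ^ 2)]
      have h5 := sq_sum_mulVec_le B (fun b => v (Fin.castSucc b))
      have h6 : (0:ℝ) ≤ ‖B‖ ^ 2 := sq_nonneg _
      nlinarith [sq_nonneg (v (Fin.last m))]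
    have hr1 : ‖Matrix.of (fun i j => vx i * wx j)‖
        ≤ Real.sqrt (∑ i, vx i ^ 2) * Real.sqrt (∑ j, wx j ^ 2) := rank_one_norm_le vx wx
    have hvxsum : ∑ i, vx i ^ 2 = (∑ b, c b ^ 2) + 1 := by
      rw [Fin.sum_univ_castSucc, hvx]
      simp
    have hwxsum : ∑ j, wx j ^ 2 = (∑ b, w b ^ 2) + 1 := by
      rw [Fin.sum_univ_castSucc, hwx]
      simp
    have hgsum : ∑ k, g k ^ 2 ≤ 1 := by
      have h7 : ∀ k : Fin m, g k ^ 2 = (fun j : Fin r => (U z j) ^ 2) (Fin.castLE hmr k) := by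
        intro k
        rw [hg]
        show (Uc U (k : ℕ) z) ^ 2 = (U z (Fin.castLE hmr k)) ^ 2
        rw [Uc_lt U (lt_of_lt_of_le k.isLt hmr)]
        rfl
      rw [Finset.sum_congr rfl fun k _ => h7 k]
      exact le_trans
        (sum_sel_le (Fin.castLE hmr) (Fin.castLE_injective hmr) _ (fun j => sq_nonneg _))
        (row_sq_le_one U hU z)
    have hwsum : ∑ b, w b ^ 2 ≤ ‖B‖ ^ 2 * ∑ k, g k ^ 2 := by
      have h8 : ∀ b, w b = Bᵀ.mulVec g b := by
        intro b
        rw [hw]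
        show ∑ k, g k * B k b = ∑ k, Bᵀ b k * g k
        exact Finset.sum_congr rfl fun k _ => by rw [Matrix.transpose_apply]; ring
      rw [Finset.sum_congr rfl fun b _ => by rw [h8 b]]
      have h9 := sq_sum_mulVec_le Bᵀ g
      have hBT : ‖Bᵀ‖ = ‖B‖ := by
        have : Bᵀ = Bᴴ := by
          ext i j
          simp [Matrix.conjTranspose_apply]
        rw [this]
        exact Matrix.l2_opNorm_conjTranspose B
      rwa [hBT] at h9
    have hwxle : ∑ j, wx j ^ 2 ≤ 2 * ‖B‖ ^ 2 := by
      rw [hwxsum]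
      have hgnn : (0:ℝ) ≤ ∑ k, g k ^ 2 := by positivity
      nlinarith [hwsum, hgsum, hB1, sq_nonneg ‖B‖]
    -- the scalar estimate
    have hnn : (0:ℝ) ≤ (n:ℝ) := Nat.cast_nonneg n
    have hstep1 : Real.sqrt ((∑ b, c b ^ 2) + 1) ≤ Real.sqrt n * |ρ| := by
      rw [← Real.sqrt_sq_eq_abs, ← Real.sqrt_mul hnn]
      apply Real.sqrt_le_sqrt
      linarith [hnR]
    have hstep2 : Real.sqrt (∑ j, wx j ^ 2) ≤ Real.sqrt 2 * ‖B‖ := by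
      have : Real.sqrt (∑ j, wx j ^ 2) ≤ Real.sqrt (2 * ‖B‖ ^ 2) := Real.sqrt_le_sqrt hwxle
      rwa [Real.sqrt_mul (by norm_num : (0:ℝ) ≤ 2), Real.sqrt_sq (norm_nonneg B)] at this
    have habsρ : 0 < |ρ| := abs_pos.mpr hRz
    have hscalar : |ρ|⁻¹ * (Real.sqrt ((∑ b, c b ^ 2) + 1) * Real.sqrt (∑ j, wx j ^ 2))
        ≤ Real.sqrt (2 * n) * ‖B‖ := by
      have h10 : Real.sqrt ((∑ b, c b ^ 2) + 1) * Real.sqrt (∑ j, wx j ^ 2)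
          ≤ (Real.sqrt n * |ρ|) * (Real.sqrt 2 * ‖B‖) := by
        apply mul_le_mul hstep1 hstep2 (Real.sqrt_nonneg _)
        positivity
      have h11 : |ρ|⁻¹ * ((Real.sqrt n * |ρ|) * (Real.sqrt 2 * ‖B‖))
          = Real.sqrt n * Real.sqrt 2 * ‖B‖ := by
        field_simp
      calc |ρ|⁻¹ * (Real.sqrt ((∑ b, c b ^ 2) + 1) * Real.sqrt (∑ j, wx j ^ 2))
          ≤ |ρ|⁻¹ * ((Real.sqrt n * |ρ|) * (Real.sqrt 2 * ‖B‖)) := by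
            apply mul_le_mul_of_nonneg_left h10 (by positivity)
        _ = Real.sqrt n * Real.sqrt 2 * ‖B‖ := h11
        _ = Real.sqrt (2 * n) * ‖B‖ := by
            rw [Real.sqrt_mul (by norm_num : (0:ℝ) ≤ 2) n]
            ring
    -- combine
    have hNnorm : ‖N‖ ≤ (1 + Real.sqrt (2 * n)) * ‖B‖ := by
      rw [hN]
      calc ‖E + ρ⁻¹ • Matrix.of (fun i j => vx i * wx j)‖
          ≤ ‖E‖ + ‖ρ⁻¹ • Matrix.of (fun i j => vx i * wx j)‖ := norm_add_le _ _
        _ = ‖E‖ + |ρ|⁻¹ * ‖Matrix.of (fun i j => vx i * wx j)‖ := by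
            rw [norm_smul, Real.norm_eq_abs, abs_inv]
        _ ≤ ‖B‖ + |ρ|⁻¹ * (Real.sqrt ((∑ b, c b ^ 2) + 1) * Real.sqrt (∑ j, wx j ^ 2)) := by
            have hr1' : ‖Matrix.of (fun i j => vx i * wx j)‖
                ≤ Real.sqrt ((∑ b, c b ^ 2) + 1) * Real.sqrt (∑ j, wx j ^ 2) := by
              rw [← hvxsum]
              exact hr1
            exact add_le_add hEnorm (mul_le_mul_of_nonneg_left hr1' (by positivity))
        _ ≤ ‖B‖ + Real.sqrt (2 * n) * ‖B‖ := by linarith [hscalar]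
        _ = (1 + Real.sqrt (2 * n)) * ‖B‖ := by ring
    refine ⟨hinj', hM'unit, ?_⟩
    rw [hM'inv]
    have hfinal : (1 + Real.sqrt (2 * n)) * ((1 + Real.sqrt (2 * n)) ^ (m - 1) / s)
        = (1 + Real.sqrt (2 * n)) ^ (m + 1 - 1) / s := by
      rw [show m + 1 - 1 = (m - 1) + 1 by omega, pow_succ']
      ring
    calc ‖N‖ ≤ (1 + Real.sqrt (2 * n)) * ‖B‖ := hNnorm
      _ ≤ (1 + Real.sqrt (2 * n)) * ((1 + Real.sqrt (2 * n)) ^ (m - 1) / s) :=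
          mul_le_mul_of_nonneg_left hBle hK0
      _ = (1 + Real.sqrt (2 * n)) ^ (m + 1 - 1) / s := hfinal

end U
end DeimAux

/-- DEIM conditioning bound: for `U` with orthonormal columns and DEIM-selected
row indices `I`, `U(I,:)` is invertible and
`‖U(I,:)⁻¹‖₂ ≤ (1 + √(2n))^(r−1) / ‖u₁‖_∞`. -/
theorem deim_conditioning_bound {n r : ℕ} [NeZero n] [NeZero r]
    (U : Matrix (Fin n) (Fin r) ℝ) (hU : Uᵀ * U = 1) :
    IsUnit (U.submatrix (deimSelect U) id) ∧
    ‖LinearMap.toContinuousLinearMap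
        (Matrix.toEuclideanLin (U.submatrix (deimSelect U) id)⁻¹)‖ ≤
      (1 + Real.sqrt (2 * n)) ^ (r - 1) /
        (Finset.univ.sup' Finset.univ_nonempty fun x => |U x 0|) := by
  obtain ⟨hinj, hunit, hbound⟩ :=
    DeimAux.deim_main U hU r (Nat.one_le_iff_ne_zero.mpr (NeZero.ne r)) le_rfl
  have hM : U.submatrix (deimSelect U) id = DeimAux.selM U r := by
    ext a b
    show U (deimSelect U a) b = DeimAux.Uc U (b : ℕ) (deimStep n (DeimAux.Uc U) r a)
    rw [DeimAux.Uc_lt U b.isLt]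
    rfl
  rw [hM]
  exact ⟨hunit, hbound⟩
end

section
/- Any nonzero idempotent matrix that is not the identity has spectral norm at least 1, and its norm equals the norm of its complement: if P² = P with P ≠ 0 and P ≠ I, then ‖P‖₂ = ‖I − P‖₂ ≥ 1. -/
open Matrix

/-- Spectral (operator 2-) norm of a matrix. -/
noncomputable def opNorm {m n : Type*} [Fintype m] [Fintype n] [DecidableEq n]
    (A : Matrix m n ℝ) : ℝ :=
  ‖LinearMap.toContinuousLinearMap (Matrix.toEuclideanLin A)‖

section Aux
open ContinuousLinearMap
set_option maxHeartbeats 1000000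
set_option synthInstance.maxHeartbeats 200000

namespace IdemAux


variable {n : ℕ}

local notation "E" => EuclideanSpace ℝ (Fin n)

lemma one_le_norm_idem (a : E →L[ℝ] E) (ha : a * a = a) (h0 : a ≠ 0) : 1 ≤ ‖a‖ := by
  obtain ⟨x, hx⟩ : ∃ x, a x ≠ 0 := by
    by_contra h
    push_neg at h
    exact h0 (ContinuousLinearMap.ext fun x => by simp [h x])
  have hfix : a (a x) = a x := by
    have := congrFun (congrArg DFunLike.coe ha) x
    simpa [ContinuousLinearMap.mul_apply] using this
  have := a.le_opNorm (a x)
  rw [hfix] at this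
  exact (le_mul_iff_one_le_left (norm_pos_iff.mpr hx)).mp this

lemma norm_idem_le (a : E →L[ℝ] E) (ha : a * a = a) : ‖a‖ ≤ ‖a + star a - 1‖ := by
  set D := a + star a - 1 with hDdef
  refine a.opNorm_le_bound (norm_nonneg D) (fun x => ?_)
  have key : (inner ℝ (a x) (D x) : ℝ) = ‖a x‖ ^ 2 := by
    have h1 : (inner ℝ (a x) ((star a) x) : ℝ) = inner ℝ (a x) x := by
      rw [star_eq_adjoint, adjoint_inner_right]
      have : a (a x) = a x := by
        have := congrFun (congrArg DFunLike.coe ha) x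
        simpa [ContinuousLinearMap.mul_apply] using this
      rw [this]
    have : D x = a x + (star a) x - x := rfl
    rw [this, inner_sub_right, inner_add_right, h1, real_inner_self_eq_norm_sq]
    ring
  rcases eq_or_ne (a x) 0 with h | h
  · rw [h, norm_zero]
    exact mul_nonneg (norm_nonneg _) (norm_nonneg _)
  · have h2 : ‖a x‖ ^ 2 ≤ ‖a x‖ * (‖D x‖) := by
      calc ‖a x‖ ^ 2 = inner ℝ (a x) (D x) := key.symm
        _ ≤ ‖a x‖ * ‖D x‖ := real_inner_le_norm _ _
    have h3 := D.le_opNorm x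
    have hpos : (0:ℝ) < ‖a x‖ := norm_pos_iff.mpr h
    nlinarith [norm_nonneg (a x)]

lemma norm_D_le (a : E →L[ℝ] E) (ha : a * a = a) (h0 : a ≠ 0) :
    ‖a + star a - 1‖ ≤ ‖a‖ := by
  have hsa : star a * star a = star a := by rw [← star_mul a a, ha]
  set D : E →L[ℝ] E := a + star a - 1 with hDdef
  set C : E →L[ℝ] E := a - star a with hCdef
  have hDstar : star D = D := by
    rw [hDdef, star_sub (a + star a) 1, star_add a (star a), star_one, star_star]
    abel
  have hCstar : star C = -C := by
    rw [hCdef, star_sub a (star a), star_star]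
    abel
  have hDC : D * C = -(C * D) := by
    rw [hDdef, hCdef]
    simp only [mul_sub, sub_mul, mul_add, add_mul, mul_one, one_mul, ha, hsa, neg_sub]
    abel
  have hD2 : D * D = 1 - C * C := by
    rw [hDdef, hCdef]
    simp only [mul_sub, sub_mul, mul_add, add_mul, mul_one, one_mul, ha, hsa]
    abel
  have hsym : ∀ u v : E, (inner ℝ (D v) u : ℝ) = inner ℝ v (D u) := by
    intro u v
    have h := adjoint_inner_left D u v
    rwa [← star_eq_adjoint, hDstar] at h
  have hskew : ∀ u v : E, (inner ℝ (C v) u : ℝ) = -inner ℝ v (C u) := by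
    intro u v
    have h := adjoint_inner_left C u v
    rw [← star_eq_adjoint, hCstar] at h
    simp only [ContinuousLinearMap.neg_apply, inner_neg_left] at h
    linarith [h]
  have hD2pt : ∀ x : E, D (D x) = x - C (C x) := by
    intro x
    have := congrFun (congrArg DFunLike.coe hD2) x
    simpa [ContinuousLinearMap.mul_apply, ContinuousLinearMap.sub_apply] using this
  have normid : ∀ x : E, ‖D x‖ ^ 2 = ‖x‖ ^ 2 + ‖C x‖ ^ 2 := by
    intro x
    have h1 : (inner ℝ (D x) (D x) : ℝ) = inner ℝ x (D (D x)) := hsym (D x) x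
    have h2 : (inner ℝ (C x) (C x) : ℝ) = -inner ℝ x (C (C x)) := hskew (C x) x
    rw [real_inner_self_eq_norm_sq] at h1 h2
    rw [hD2pt x, inner_sub_right, real_inner_self_eq_norm_sq] at h1
    linarith
  have hone : 1 ≤ ‖a‖ := one_le_norm_idem a ha h0
  rcases le_or_gt ‖D‖ 1 with hl | hl
  · linarith
  set l : ℝ := ‖D‖ with hldef
  obtain ⟨x', hx'⟩ : ∃ x, a x ≠ 0 := by
    by_contra h
    push_neg at h
    exact h0 (ContinuousLinearMap.ext fun x => by simp [h x])
  have hx'ne : x' ≠ 0 := fun h => hx' (by rw [h]; simp)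
  haveI : Nontrivial (EuclideanSpace ℝ (Fin n)) := ⟨⟨x', 0, hx'ne⟩⟩
  have hsph : (Metric.sphere (0 : E) 1).Nonempty :=
    NormedSpace.sphere_nonempty.mpr zero_le_one
  obtain ⟨x₀, hx₀mem, hmax⟩ :=
    (isCompact_sphere (0 : E) 1).exists_isMaxOn hsph
      ((D * D).reApplyInnerSelf_continuous.continuousOn)
  have hx₀norm : ‖x₀‖ = 1 := by simpa using hx₀mem
  have hx₀ne : x₀ ≠ 0 := by
    intro h; rw [h, norm_zero] at hx₀norm; exact zero_ne_one hx₀norm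
  have hri : ∀ x : E, (D * D).reApplyInnerSelf x = ‖D x‖ ^ 2 := by
    intro x
    rw [ContinuousLinearMap.reApplyInnerSelf_apply]
    have h1 : (inner ℝ ((D * D) x) x : ℝ) = ‖D x‖ ^ 2 := by
      have : (D * D) x = D (D x) := rfl
      rw [this, hsym x (D x), real_inner_self_eq_norm_sq]
    simpa using h1
  have hTsa : IsSelfAdjoint (D * D) := by
    show star (D * D) = D * D
    rw [star_mul D D, hDstar]
  have hDx₀ : ‖D x₀‖ = l := by
    refine le_antisymm ?_ ?_
    · have := D.le_opNorm x₀; rw [hx₀norm, mul_one] at this; exact this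
    · refine D.opNorm_le_bound (norm_nonneg _) (fun y => ?_)
      rcases eq_or_ne y 0 with rfl | hy
      · simp
      · have hyn : (0:ℝ) < ‖y‖ := norm_pos_iff.mpr hy
        set u : E := ‖y‖⁻¹ • y with hu
        have hun : ‖u‖ = 1 := by
          rw [hu, norm_smul, norm_inv, norm_norm, inv_mul_cancel₀ hyn.ne']
        have humem : u ∈ Metric.sphere (0 : E) 1 := by simpa using hun
        have hmx := hmax humem
        simp only [Set.mem_setOf_eq, hri u, hri x₀] at hmx
        have hDu : ‖D u‖ ≤ ‖D x₀‖ := by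
          nlinarith [norm_nonneg (D u), norm_nonneg (D x₀)]
        have hyu : y = ‖y‖ • u := by
          rw [hu, smul_smul, mul_inv_cancel₀ hyn.ne', one_smul]
        have hDyu : D y = ‖y‖ • D u := by
          conv_lhs => rw [hyu]
          rw [_root_.map_smul]
        calc ‖D y‖ = ‖y‖ * ‖D u‖ := by rw [hDyu, norm_smul, norm_norm]
          _ ≤ ‖D x₀‖ * ‖y‖ := by nlinarith
  have heig : D (D x₀) = (l ^ 2) • x₀ := by
    have hextr : IsLocalExtrOn (D * D).reApplyInnerSelf
        (Metric.sphere (0 : E) ‖x₀‖) x₀ := by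
      rw [hx₀norm]; exact Or.inr hmax.localize
    have h := hTsa.eq_smul_self_of_isLocalExtrOn hextr
    have hrq : (D * D).rayleighQuotient x₀ = l ^ 2 := by
      rw [ContinuousLinearMap.rayleighQuotient, hri x₀, hx₀norm, hDx₀]
      simp
    rw [hrq] at h
    have : (D * D) x₀ = D (D x₀) := rfl
    rw [this] at h
    simpa using h
  have hDCpt : ∀ x : E, D (C x) = -(C (D x)) := by
    intro x
    have := congrFun (congrArg DFunLike.coe hDC) x
    simpa [ContinuousLinearMap.mul_apply, ContinuousLinearMap.neg_apply] using this
  obtain ⟨e, he0, hDe⟩ : ∃ e : E, e ≠ 0 ∧ D e = l • e := by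
    by_cases hp : D x₀ + l • x₀ = 0
    · have hDx₀eq : D x₀ = -(l • x₀) := eq_neg_of_add_eq_zero_left hp
      refine ⟨C x₀, ?_, ?_⟩
      · have hni := normid x₀
        rw [hDx₀, hx₀norm] at hni
        intro h
        rw [h, norm_zero] at hni
        nlinarith
      · rw [hDCpt x₀, hDx₀eq, _root_.map_neg, _root_.map_smul, neg_neg]
    · refine ⟨D x₀ + l • x₀, hp, ?_⟩
      rw [_root_.map_add, _root_.map_smul, heig, smul_add, smul_smul, ← sq]
      abel
  -- the 2-dimensional computation
  set y : E := C e with hy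
  have hDy : D y = -(l • y) := by
    rw [hy, hDCpt e, hDe, _root_.map_smul]
  have hCy : C y = (1 - l ^ 2) • e := by
    have h5 : C (C e) = e - D (D e) := by
      have := hD2pt e
      rw [this]; abel
    rw [hy, h5, hDe, _root_.map_smul, hDe, smul_smul, ← sq, sub_smul, one_smul]
  have hip : (inner ℝ e y : ℝ) = 0 := by
    have h := hskew e e
    rw [← hy] at h
    have h2 : (inner ℝ e y : ℝ) = inner ℝ y e := real_inner_comm y e
    linarith [h, h2]
  have hey : ‖y‖ ^ 2 = (l ^ 2 - 1) * ‖e‖ ^ 2 := by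
    have hni := normid e
    rw [hDe, norm_smul] at hni
    have hl0 : (0:ℝ) ≤ l := le_of_lt (lt_trans one_pos hl)
    rw [Real.norm_eq_abs, abs_of_nonneg hl0] at hni
    rw [← hy] at hni
    nlinarith [hni]
  set z : E := (l + 1) • e - y with hz
  set w : E := (l + 1) • e + y with hw
  have haz : a z = l • w := by
    have hsum : D + C + 1 = a + a := by
      rw [hDdef, hCdef]; abel
    have hpt : D z + C z + z = a z + a z := by
      have := congrFun (congrArg DFunLike.coe hsum) z
      simpa [ContinuousLinearMap.add_apply, ContinuousLinearMap.one_apply] using this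
    have hDz : D z = (l * (l + 1)) • e + l • y := by
      rw [hz, _root_.map_sub, _root_.map_smul, hDe, hDy, smul_smul]
      module
    have hCz : C z = ((l ^ 2 - 1)) • e + (l + 1) • y := by
      rw [hz, _root_.map_sub, _root_.map_smul, hCy, ← hy]
      module
    have h2az : a z + a z = l • w + l • w := by
      rw [← hpt, hDz, hCz, hz, hw]
      module
    have h6 : (2:ℝ) • (a z) = (2:ℝ) • (l • w) := by
      rw [two_smul ℝ (a z), two_smul ℝ (l • w)]
      exact h2az
    exact smul_right_injective E (two_ne_zero (α := ℝ)) h6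
  have hnzw : ‖z‖ = ‖w‖ := by
    have h1 : ‖z‖ ^ 2 = ‖(l+1) • e‖ ^ 2 - 2 * inner ℝ ((l+1) • e) y + ‖y‖ ^ 2 := by
      rw [hz]; exact norm_sub_sq_real _ _
    have h2 : ‖w‖ ^ 2 = ‖(l+1) • e‖ ^ 2 + 2 * inner ℝ ((l+1) • e) y + ‖y‖ ^ 2 := by
      rw [hw]; exact norm_add_sq_real _ _
    have h3 : (inner ℝ ((l+1) • e) y : ℝ) = 0 := by
      rw [real_inner_smul_left, hip, mul_zero]
    rw [h3] at h1 h2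
    have hsq : ‖z‖ ^ 2 = ‖w‖ ^ 2 := by rw [h1, h2]; ring
    have h4 := congrArg Real.sqrt hsq
    rwa [Real.sqrt_sq (norm_nonneg z), Real.sqrt_sq (norm_nonneg w)] at h4
  have hzne : z ≠ 0 := by
    intro h
    have h1 : ‖z‖ ^ 2 = (l+1) ^ 2 * ‖e‖ ^ 2 + ‖y‖ ^ 2 := by
      have := norm_sub_sq_real ((l+1) • e) y
      rw [← hz, real_inner_smul_left, hip, mul_zero] at this
      rw [this, norm_smul, Real.norm_eq_abs]
      have : |l + 1| = l + 1 := abs_of_pos (by linarith)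
      rw [this]; ring
    rw [h, norm_zero] at h1
    have hepos : (0:ℝ) < ‖e‖ ^ 2 := by
      have := norm_pos_iff.mpr he0
      positivity
    nlinarith [norm_nonneg y, sq_nonneg (l+1)]
  have hzpos : (0:ℝ) < ‖z‖ := norm_pos_iff.mpr hzne
  have hfin : ‖a z‖ = l * ‖z‖ := by
    rw [haz, norm_smul, Real.norm_eq_abs, abs_of_pos (lt_trans one_pos hl), hnzw]
  have := a.le_opNorm z
  rw [hfin] at this
  exact le_of_mul_le_mul_right (by linarith) hzpos

lemma norm_idem_eq_D (a : E →L[ℝ] E) (ha : a * a = a) (h0 : a ≠ 0) :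
    ‖a‖ = ‖a + star a - 1‖ :=
  le_antisymm (norm_idem_le a ha) (norm_D_le a ha h0)



end IdemAux

open Matrix in
theorem final {n : ℕ}
    (P : Matrix (Fin n) (Fin n) ℝ) (hP : P * P = P) (h0 : P ≠ 0) (h1 : P ≠ 1) :
    ‖LinearMap.toContinuousLinearMap (Matrix.toEuclideanLin P)‖
      = ‖LinearMap.toContinuousLinearMap (Matrix.toEuclideanLin (1 - P))‖ ∧
      1 ≤ ‖LinearMap.toContinuousLinearMap (Matrix.toEuclideanLin P)‖ := by
  set a := Matrix.toEuclideanCLM (𝕜 := ℝ) P with hadef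
  have hop : ‖LinearMap.toContinuousLinearMap (Matrix.toEuclideanLin P)‖ = ‖a‖ := rfl
  have key2 : LinearMap.toContinuousLinearMap (Matrix.toEuclideanLin (1 - P))
      = (1 : EuclideanSpace ℝ (Fin n) →L[ℝ] EuclideanSpace ℝ (Fin n)) - a := by
    have h : Matrix.toEuclideanCLM (𝕜 := ℝ) (1 - P)
        = (1 : EuclideanSpace ℝ (Fin n) →L[ℝ] EuclideanSpace ℝ (Fin n)) - a := by
      rw [_root_.map_sub, _root_.map_one, hadef]
    exact h
  have hop2 : ‖LinearMap.toContinuousLinearMap (Matrix.toEuclideanLin (1 - P))‖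
      = ‖(1 : EuclideanSpace ℝ (Fin n) →L[ℝ] EuclideanSpace ℝ (Fin n)) - a‖ :=
    congrArg norm key2
  have ha : a * a = a := by rw [hadef, ← _root_.map_mul, hP]
  have h0' : a ≠ 0 := by
    intro h
    refine h0 ((Matrix.toEuclideanCLM (n := Fin n) (𝕜 := ℝ)).injective ?_)
    show Matrix.toEuclideanCLM (n := Fin n) (𝕜 := ℝ) P = Matrix.toEuclideanCLM (n := Fin n) (𝕜 := ℝ) 0
    rw [← hadef, h, _root_.map_zero]
  have h1' : a ≠ 1 := by
    intro h
    refine h1 ((Matrix.toEuclideanCLM (n := Fin n) (𝕜 := ℝ)).injective ?_)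
    show Matrix.toEuclideanCLM (n := Fin n) (𝕜 := ℝ) P = Matrix.toEuclideanCLM (n := Fin n) (𝕜 := ℝ) 1
    rw [← hadef, h, _root_.map_one]
  have hb : (1 - a) * (1 - a) = 1 - a := by
    rw [sub_mul, one_mul, mul_sub, mul_one, ha]
    abel
  have hb0 : (1 : EuclideanSpace ℝ (Fin n) →L[ℝ] EuclideanSpace ℝ (Fin n)) - a ≠ 0 := by
    intro h
    exact h1' (sub_eq_zero.mp h).symm
  have hstar : star ((1 : EuclideanSpace ℝ (Fin n) →L[ℝ] EuclideanSpace ℝ (Fin n)) - a)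
      = 1 - star a := by
    rw [star_sub (1 : EuclideanSpace ℝ (Fin n) →L[ℝ] EuclideanSpace ℝ (Fin n)) a, star_one]
  have hDs : (1 - a) + star ((1 : EuclideanSpace ℝ (Fin n) →L[ℝ] EuclideanSpace ℝ (Fin n)) - a) - 1
      = -(a + star a - 1) := by
    rw [hstar]; abel
  constructor
  · rw [hop, hop2, IdemAux.norm_idem_eq_D a ha h0', IdemAux.norm_idem_eq_D (1 - a) hb hb0, hDs,
      norm_neg]
  · rw [hop]
    exact IdemAux.one_le_norm_idem a ha h0'

end Aux

/-- A nonzero idempotent matrix that is not the identity has the same spectral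
norm as its complement, and this norm is at least `1`. -/
theorem idempotent_norm_eq_complement {n : ℕ}
    (P : Matrix (Fin n) (Fin n) ℝ) (hP : P * P = P) (h0 : P ≠ 0) (h1 : P ≠ 1) :
    opNorm P = opNorm (1 - P) ∧ 1 ≤ opNorm P :=
  final P hP h0 h1
end
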